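/- The smash product A#H is a Frobenius extension of A with Frobenius system (e = (1 # t₂) ⊗_A (1 # S̄(t₁)), ν̄ = id_A # φ); concretely: the map ν̄ : A#H → A, ν̄(a # h) = φ(h)·a, is an A-bimodule map, i.e. ν̄((a # 1)·r·(a' # 1)) = a·ν̄(r)·a' for all a, a' ∈ A and r ∈ A#H, and the dual-basis identities hold: for all r ∈ A#H, Σ ν̄(r·(1 # t₂)) # S̄(t₁) = r and Σ (1 # t₂)·(ν̄((1 # S̄(t₁))·r) # 1) = r (summation over the Sweedler components of t). -/

import Mathlib

set_option maxHeartbeats 1600000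
set_option synthInstance.maxHeartbeats 400000


open TensorProduct

noncomputable section

variable {k H A : Type*} [CommRing k] [Ring H] [HopfAlgebra k H]
  [Ring A] [Algebra k A]

/-- For a left `H`-module structure `act` on `A`, the map `H ⊗ A → A ⊗ H`,
`h ⊗ a ↦ (h₁ · a) ⊗ h₂`, inducing the smash product. -/
def smashRH (act : H →ₗ[k] A →ₗ[k] A) : H ⊗[k] A →ₗ[k] A ⊗[k] H :=
  (TensorProduct.comm k H A).toLinearMap ∘ₗ
    LinearMap.lTensor H (TensorProduct.lift act) ∘ₗ
    (TensorProduct.assoc k H H A).toLinearMap ∘ₗ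
    LinearMap.rTensor A (TensorProduct.comm k H H).toLinearMap ∘ₗ
    LinearMap.rTensor A Coalgebra.comul

/-- The map `H ⊗ (A ⊗ H) → A ⊗ H`, `h ⊗ (b ⊗ g) ↦ (h₁ · b) ⊗ h₂ g`. -/
def hInner (act : H →ₗ[k] A →ₗ[k] A) : H ⊗[k] (A ⊗[k] H) →ₗ[k] A ⊗[k] H :=
  LinearMap.lTensor A (LinearMap.mul' k H) ∘ₗ (TensorProduct.assoc k A H H).toLinearMap ∘ₗ
    LinearMap.rTensor H (smashRH act) ∘ₗ (TensorProduct.assoc k H A H).symm.toLinearMap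

/-- The smash product multiplication on `A # H = A ⊗ H`:
`(a # h)(b # g) = a (h₁ · b) # h₂ g`, as a linear map. -/
def hMulL (act : H →ₗ[k] A →ₗ[k] A) :
    (A ⊗[k] H) ⊗[k] (A ⊗[k] H) →ₗ[k] A ⊗[k] H :=
  LinearMap.rTensor H (LinearMap.mul' k A) ∘ₗ
    (TensorProduct.assoc k A A H).symm.toLinearMap ∘ₗ
    LinearMap.lTensor A (hInner act) ∘ₗ
    (TensorProduct.assoc k A H (A ⊗[k] H)).toLinearMap

/-- The smash product multiplication `(a # h)(b # g) = a (h₁ · b) # h₂ g`. -/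
def hMul (act : H →ₗ[k] A →ₗ[k] A) (x y : A ⊗[k] H) : A ⊗[k] H :=
  hMulL act (x ⊗ₜ[k] y)

/-- The Frobenius map `ν̄ : A # H → A`, `a # h ↦ φ(h) a`. -/
def hNu (φ : H →ₗ[k] k) : A ⊗[k] H →ₗ[k] A :=
  (TensorProduct.rid k A).toLinearMap ∘ₗ LinearMap.lTensor A φ

/-- The Frobenius element `e = t₂ ⊗ S̄(t₁) ∈ H ⊗ H`. -/
def hE (Sbar : H →ₗ[k] H) (t : H) : H ⊗[k] H :=
  TensorProduct.map LinearMap.id Sbar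
    (TensorProduct.comm k H H (Coalgebra.comul t))


namespace SmashAux
open LinearMap Coalgebra HopfAlgebra


lemma sum_counit_smul_left {x : H} {ι : Type*} {s : Finset ι} {L R : ι → H}
    (he : Coalgebra.comul (R := k) x = ∑ i ∈ s, L i ⊗ₜ[k] R i) :
    ∑ i ∈ s, Coalgebra.counit (R := k) (L i) • R i = x := by
  have h2 := congrArg (fun z => TensorProduct.lid k H
    ((Coalgebra.counit (R := k)).rTensor H z)) he
  simp only [Coalgebra.rTensor_counit_comul, lid_tmul, one_smul, map_sum,
    rTensor_tmul] at h2
  exact h2.symm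

lemma sum_counit_smul_right {x : H} {ι : Type*} {s : Finset ι} {L R : ι → H}
    (he : Coalgebra.comul (R := k) x = ∑ i ∈ s, L i ⊗ₜ[k] R i) :
    ∑ i ∈ s, Coalgebra.counit (R := k) (R i) • L i = x := by
  have h2 := congrArg (fun z => TensorProduct.rid k H
    ((Coalgebra.counit (R := k)).lTensor H z)) he
  simp only [Coalgebra.lTensor_counit_comul, rid_tmul, one_smul, map_sum,
    lTensor_tmul] at h2
  exact h2.symm

variable {B : Type*} [Ring B] [Algebra k B]

/-- Convolution product of two linear maps `H →ₗ[k] B`. -/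
def conv (f g : H →ₗ[k] B) : H →ₗ[k] B :=
  LinearMap.mul' k B ∘ₗ TensorProduct.map f g ∘ₗ Coalgebra.comul

lemma conv_apply_of (f g : H →ₗ[k] B) {x : H} {ι : Type*} {s : Finset ι} {L R : ι → H}
    (he : Coalgebra.comul (R := k) x = ∑ i ∈ s, L i ⊗ₜ[k] R i) :
    conv f g x = ∑ i ∈ s, f (L i) * g (R i) := by
  simp only [conv, LinearMap.comp_apply, he, map_sum, TensorProduct.map_tmul, mul'_apply]

lemma conv_unique (f m g : H →ₗ[k] B)
    (h1 : ∀ x : H, conv f m x = Coalgebra.counit (R := k) x • 1)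
    (h2 : ∀ x : H, conv m g x = Coalgebra.counit (R := k) x • 1) : f = g := by
  ext x
  have key := Coalgebra.sum_map_tmul_tmul_eq (R := k) f m g x (repr := ℛ k x)
      (a₁ := fun i => ℛ k ((ℛ k x).left i)) (a₂ := fun i => ℛ k ((ℛ k x).right i))
  have key2 := congrArg (fun z => LinearMap.mul' k B ((LinearMap.mul' k B).lTensor B z)) key
  simp only [map_sum, lTensor_tmul, mul'_apply] at key2
  have hx1 : ∑ i ∈ (ℛ k x).index, Coalgebra.counit (R := k) ((ℛ k x).right i) • (ℛ k x).left i
      = x := sum_counit_smul_right (ℛ k x).eq.symm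
  have hx2 : ∑ i ∈ (ℛ k x).index, Coalgebra.counit (R := k) ((ℛ k x).left i) • (ℛ k x).right i
      = x := sum_counit_smul_left (ℛ k x).eq.symm
  calc f x = ∑ i ∈ (ℛ k x).index,
        Coalgebra.counit (R := k) ((ℛ k x).right i) • f ((ℛ k x).left i) := by
        conv_lhs => rw [← hx1]
        rw [map_sum]; simp only [map_smul]
    _ = ∑ i ∈ (ℛ k x).index, f ((ℛ k x).left i) * conv m g ((ℛ k x).right i) := by
        simp only [h2, mul_smul_comm, mul_one]
    _ = ∑ i ∈ (ℛ k x).index, ∑ j ∈ (ℛ k ((ℛ k x).right i)).index,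
          f ((ℛ k x).left i) * (m ((ℛ k ((ℛ k x).right i)).left j)
            * g ((ℛ k ((ℛ k x).right i)).right j)) := by
        refine Finset.sum_congr rfl fun i _ => ?_
        rw [conv_apply_of m g (ℛ k ((ℛ k x).right i)).eq.symm, Finset.mul_sum]
    _ = ∑ i ∈ (ℛ k x).index, ∑ j ∈ (ℛ k ((ℛ k x).left i)).index,
          f ((ℛ k ((ℛ k x).left i)).left j) * (m ((ℛ k ((ℛ k x).left i)).right j)
            * g ((ℛ k x).right i)) := key2
    _ = ∑ i ∈ (ℛ k x).index, conv f m ((ℛ k x).left i) * g ((ℛ k x).right i) := by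
        refine Finset.sum_congr rfl fun i _ => ?_
        rw [conv_apply_of f m (ℛ k ((ℛ k x).left i)).eq.symm, Finset.sum_mul]
        simp only [mul_assoc]
    _ = ∑ i ∈ (ℛ k x).index,
          Coalgebra.counit (R := k) ((ℛ k x).left i) • g ((ℛ k x).right i) := by
        simp only [h1, smul_mul_assoc, one_mul]
    _ = g x := by
        conv_rhs => rw [← hx2]
        rw [map_sum]; simp only [map_smul]



/-- `(x ⊗ y) ⊗ (c ⊗ d) ↦ (x * T d) ⊗ (y * T c)` -/
def thetaL (T : H →ₗ[k] H) : (H ⊗[k] H) ⊗[k] (H ⊗[k] H) →ₗ[k] H ⊗[k] H :=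
  TensorProduct.map (LinearMap.mul' k H) (LinearMap.mul' k H) ∘ₗ
    (TensorProduct.tensorTensorTensorComm k H H H H).toLinearMap ∘ₗ
    LinearMap.lTensor (H ⊗[k] H) (TensorProduct.map T T ∘ₗ (TensorProduct.comm k H H).toLinearMap)

@[simp] lemma thetaL_tmul (T : H →ₗ[k] H) (x y c d : H) :
    thetaL T ((x ⊗ₜ[k] y) ⊗ₜ[k] (c ⊗ₜ[k] d)) = (x * T d) ⊗ₜ[k] (y * T c) := by
  simp [thetaL, tensorTensorTensorComm_tmul]

/-- `(α ⊗ β) ⊗ (m ⊗ n) ↦ (m * T β) ⊗ (n ⊗ T α)` -/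
def theta (T : H →ₗ[k] H) : (H ⊗[k] H) ⊗[k] (H ⊗[k] H) →ₗ[k] H ⊗[k] (H ⊗[k] H) :=
  LinearMap.rTensor (H ⊗[k] H) (LinearMap.mul' k H) ∘ₗ
    (TensorProduct.tensorTensorTensorComm k H H H H).toLinearMap ∘ₗ
    LinearMap.lTensor (H ⊗[k] H) (TensorProduct.map T T ∘ₗ (TensorProduct.comm k H H).toLinearMap) ∘ₗ
    (TensorProduct.comm k (H ⊗[k] H) (H ⊗[k] H)).toLinearMap

@[simp] lemma theta_tmul (T : H →ₗ[k] H) (α β m n : H) :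
    theta T ((α ⊗ₜ[k] β) ⊗ₜ[k] (m ⊗ₜ[k] n)) = (m * T β) ⊗ₜ[k] (n ⊗ₜ[k] T α) := by
  simp [theta, tensorTensorTensorComm_tmul]

/-- `x ⊗ (y ⊗ z) ↦ (w * T z) ⊗ (x * T y)` -/
def xiMap (T : H →ₗ[k] H) (w : H) : H ⊗[k] (H ⊗[k] H) →ₗ[k] H ⊗[k] H :=
  (TensorProduct.comm k H H).toLinearMap ∘ₗ
  TensorProduct.map (LinearMap.mul' k H ∘ₗ LinearMap.lTensor H T)
      (LinearMap.mulLeft k w ∘ₗ T) ∘ₗ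
    (TensorProduct.assoc k H H H).symm.toLinearMap

@[simp] lemma xiMap_tmul (T : H →ₗ[k] H) (w x y z : H) :
    xiMap T w (x ⊗ₜ[k] (y ⊗ₜ[k] z)) = (w * T z) ⊗ₜ[k] (x * T y) := by
  simp [xiMap]

/-- `x ⊗ (y ⊗ z) ↦ (y * T x) ⊗ (z ⊗ T w)` -/
def zetaMap (T : H →ₗ[k] H) (w : H) : H ⊗[k] (H ⊗[k] H) →ₗ[k] H ⊗[k] (H ⊗[k] H) :=
  TensorProduct.map
      (LinearMap.mul' k H ∘ₗ (TensorProduct.comm k H H).toLinearMap ∘ₗ LinearMap.rTensor H T)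
      ((TensorProduct.mk k H H).flip (T w)) ∘ₗ
    (TensorProduct.assoc k H H H).symm.toLinearMap

@[simp] lemma zetaMap_tmul (T : H →ₗ[k] H) (w x y z : H) :
    zetaMap T w (x ⊗ₜ[k] (y ⊗ₜ[k] z)) = (y * T x) ⊗ₜ[k] (z ⊗ₜ[k] T w) := by
  simp [zetaMap]


lemma conv_antiS_comul (x : H) :
    conv (Coalgebra.comul (R := k) ∘ₗ antipode k) (Coalgebra.comul (R := k)) x
      = Coalgebra.counit (R := k) x • 1 := by
  rw [conv_apply_of _ _ (ℛ k x).eq.symm]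
  calc ∑ i ∈ (ℛ k x).index,
        (Coalgebra.comul (R := k) ∘ₗ antipode k) ((ℛ k x).left i) * Coalgebra.comul ((ℛ k x).right i)
      = Coalgebra.comul (R := k) (∑ i ∈ (ℛ k x).index,
          antipode (R := k) ((ℛ k x).left i) * (ℛ k x).right i) := by
        rw [map_sum]
        simp only [LinearMap.comp_apply, Bialgebra.comul_mul]
    _ = Coalgebra.counit (R := k) x • 1 := by
        rw [sum_antipode_mul_eq_smul (ℛ k x), map_smul]
        congr 1
        exact Bialgebra.comul_one

lemma conv_comul_antiS (x : H) :
    conv (Coalgebra.comul (R := k))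
      (TensorProduct.map (antipode k) (antipode k) ∘ₗ (TensorProduct.comm k H H).toLinearMap
        ∘ₗ Coalgebra.comul) x = Coalgebra.counit (R := k) x • 1 := by
  set S : H →ₗ[k] H := antipode (R := k) with hS
  set gg : H →ₗ[k] H ⊗[k] H := TensorProduct.map S S ∘ₗ (TensorProduct.comm k H H).toLinearMap
    ∘ₗ Coalgebra.comul with hgg
  set QL : H ⊗[k] (H ⊗[k] H) →ₗ[k] H ⊗[k] H :=
    thetaL S ∘ₗ (TensorProduct.assoc k H H (H ⊗[k] H)).symm.toLinearMap
      ∘ₗ LinearMap.lTensor H (LinearMap.lTensor H (Coalgebra.comul (R := k))) with hQL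
  have QL_apply : ∀ (e w y : H), QL (e ⊗ₜ[k] (w ⊗ₜ[k] y))
      = ∑ j ∈ (ℛ k y).index, (e * S ((ℛ k y).right j)) ⊗ₜ[k] (w * S ((ℛ k y).left j)) := by
    intro e w y
    rw [hQL]
    simp only [LinearMap.comp_apply, lTensor_tmul, LinearEquiv.coe_coe]
    rw [← (ℛ k y).eq]
    simp only [tmul_sum, map_sum, assoc_symm_tmul, thetaL_tmul]
  have sub1 : ∀ (e w y : H), (e ⊗ₜ[k] w) * gg y = QL (e ⊗ₜ[k] (w ⊗ₜ[k] y)) := by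
    intro e w y
    rw [QL_apply, hgg]
    simp only [LinearMap.comp_apply, LinearEquiv.coe_coe]
    rw [← (ℛ k y).eq]
    simp only [map_sum, comm_tmul, TensorProduct.map_tmul, Finset.mul_sum,
      Algebra.TensorProduct.tmul_mul_tmul]
  -- main computation
  rw [conv_apply_of _ _ (ℛ k x).eq.symm]
  have stepB : ∀ i, Coalgebra.comul (R := k) ((ℛ k x).left i) * gg ((ℛ k x).right i)
      = ∑ m ∈ (ℛ k ((ℛ k x).left i)).index,
          QL ((ℛ k ((ℛ k x).left i)).left m ⊗ₜ[k]
            ((ℛ k ((ℛ k x).left i)).right m ⊗ₜ[k] (ℛ k x).right i)) := by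
    intro i
    rw [← (ℛ k ((ℛ k x).left i)).eq, Finset.sum_mul]
    exact Finset.sum_congr rfl fun m _ => sub1 _ _ _
  rw [Finset.sum_congr rfl fun i _ => stepB i]
  have key := Coalgebra.sum_tmul_tmul_eq (R := k) (ℛ k x)
      (fun i => ℛ k ((ℛ k x).left i)) (fun i => ℛ k ((ℛ k x).right i))
  have keyQ := congrArg (fun z => QL z) (key)
  simp only [map_sum] at keyQ
  rw [keyQ]
  -- now per i: Σ_j QL (l i ⊗ (c ij ⊗ d ij)) collapse
  have stepE : ∀ i, ∑ j ∈ (ℛ k ((ℛ k x).right i)).index,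
      QL ((ℛ k x).left i ⊗ₜ[k] ((ℛ k ((ℛ k x).right i)).left j ⊗ₜ[k]
        (ℛ k ((ℛ k x).right i)).right j))
      = ((ℛ k x).left i * S ((ℛ k x).right i)) ⊗ₜ[k] 1 := by
    intro i
    set rr := ℛ k ((ℛ k x).right i) with hrr
    have keyi := Coalgebra.sum_tmul_tmul_eq (R := k) rr
        (fun j => ℛ k (rr.left j)) (fun j => ℛ k (rr.right j))
    have keyiX := congrArg (fun z => xiMap S ((ℛ k x).left i) z) keyi
    simp only [map_sum, xiMap_tmul] at keyiX
    have lhs_eq : ∑ j ∈ rr.index, QL ((ℛ k x).left i ⊗ₜ[k] (rr.left j ⊗ₜ[k] rr.right j))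
        = ∑ j ∈ rr.index, ∑ m ∈ (ℛ k (rr.right j)).index,
            ((ℛ k x).left i * S ((ℛ k (rr.right j)).right m)) ⊗ₜ[k]
              (rr.left j * S ((ℛ k (rr.right j)).left m)) := by
      refine Finset.sum_congr rfl fun j _ => ?_
      rw [QL_apply]
    rw [lhs_eq, ← keyiX]
    calc ∑ j ∈ rr.index, ∑ m ∈ (ℛ k (rr.left j)).index,
          ((ℛ k x).left i * S (rr.right j)) ⊗ₜ[k]
            ((ℛ k (rr.left j)).left m * S ((ℛ k (rr.left j)).right m))
        = ∑ j ∈ rr.index, ((ℛ k x).left i * S (rr.right j)) ⊗ₜ[k]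
            (Coalgebra.counit (R := k) (rr.left j) • (1 : H)) := by
          refine Finset.sum_congr rfl fun j _ => ?_
          rw [← tmul_sum, sum_mul_antipode_eq_smul (ℛ k (rr.left j))]
      _ = ((ℛ k x).left i * S (∑ j ∈ rr.index,
            Coalgebra.counit (R := k) (rr.left j) • rr.right j)) ⊗ₜ[k] (1 : H) := by
          rw [map_sum, Finset.mul_sum, sum_tmul]
          refine Finset.sum_congr rfl fun j _ => ?_
          rw [tmul_smul, map_smul, mul_smul_comm, smul_tmul']
      _ = ((ℛ k x).left i * S ((ℛ k x).right i)) ⊗ₜ[k] 1 := by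
          rw [sum_counit_smul_left rr.eq.symm]
  rw [Finset.sum_congr rfl fun i _ => stepE i]
  rw [← sum_tmul, sum_mul_antipode_eq_smul (ℛ k x), ← smul_tmul',
    ← Algebra.TensorProduct.one_def]

lemma comul_comp_antipode :
    Coalgebra.comul (R := k) ∘ₗ (antipode k : H →ₗ[k] H)
      = TensorProduct.map (antipode k) (antipode k) ∘ₗ (TensorProduct.comm k H H).toLinearMap
          ∘ₗ Coalgebra.comul :=
  conv_unique _ (Coalgebra.comul (R := k)) _ conv_antiS_comul conv_comul_antiS

lemma comul_antipode_apply (x : H) :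
    Coalgebra.comul (R := k) (antipode (R := k) x)
      = TensorProduct.map (antipode k) (antipode k)
          (TensorProduct.comm k H H (Coalgebra.comul (R := k) x)) :=
  congr($(comul_comp_antipode) x)


lemma comm_comm (z : H ⊗[k] H) :
    TensorProduct.comm k H H (TensorProduct.comm k H H z) = z := by
  induction z using TensorProduct.induction_on with
  | zero => simp
  | tmul a b => simp
  | add a b ha hb => simp [ha, hb]

lemma map_antipode_antipode_inv (Sbar : H →ₗ[k] H)
    (hS1 : ∀ h : H, Sbar (antipode (R := k) h) = h) (z : H ⊗[k] H) :
    TensorProduct.map Sbar Sbar (TensorProduct.map (antipode k) (antipode k) z) = z := by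
  induction z using TensorProduct.induction_on with
  | zero => simp
  | tmul a b => simp [hS1]
  | add a b ha hb => simp [ha, hb]

lemma comul_sbar (Sbar : H →ₗ[k] H)
    (hS1 : ∀ h : H, Sbar (antipode (R := k) h) = h)
    (hS2 : ∀ h : H, antipode (R := k) (Sbar h) = h) (x : H) :
    Coalgebra.comul (R := k) (Sbar x)
      = TensorProduct.comm k H H (TensorProduct.map Sbar Sbar (Coalgebra.comul x)) := by
  have h0 := comul_antipode_apply (k := k) (Sbar x)
  rw [hS2] at h0
  have h1 := congrArg (TensorProduct.map Sbar Sbar) h0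
  rw [map_antipode_antipode_inv Sbar hS1] at h1
  have h2 := congrArg (TensorProduct.comm k H H) h1.symm
  rw [comm_comm] at h2
  exact h2

lemma comul_sbar_of (Sbar : H →ₗ[k] H)
    (hS1 : ∀ h : H, Sbar (antipode (R := k) h) = h)
    (hS2 : ∀ h : H, antipode (R := k) (Sbar h) = h)
    {x : H} {ι : Type*} {s : Finset ι} {L R : ι → H}
    (he : Coalgebra.comul (R := k) x = ∑ i ∈ s, L i ⊗ₜ[k] R i) :
    Coalgebra.comul (R := k) (Sbar x) = ∑ i ∈ s, Sbar (R i) ⊗ₜ[k] Sbar (L i) := by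
  rw [comul_sbar Sbar hS1 hS2, he]
  simp only [map_sum, TensorProduct.map_tmul, comm_tmul]

lemma counit_antipode (x : H) :
    Coalgebra.counit (R := k) (antipode (R := k) (A := H) x) = Coalgebra.counit (R := k) x := by
  have h := congrArg (Coalgebra.counit (R := k)) (sum_antipode_mul_eq_algebraMap_counit (ℛ k x))
  simp only [map_sum, Bialgebra.counit_mul, Bialgebra.counit_algebraMap] at h
  conv_lhs => rw [← sum_counit_smul_right (ℛ k x).eq.symm]
  rw [map_sum, map_sum]
  simp only [map_smul, smul_eq_mul]
  rw [← h]
  exact Finset.sum_congr rfl fun i _ => mul_comm _ _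

lemma counit_sbar (Sbar : H →ₗ[k] H)
    (hS2 : ∀ h : H, antipode (R := k) (Sbar h) = h) (x : H) :
    Coalgebra.counit (R := k) (Sbar x) = Coalgebra.counit (R := k) x := by
  have h := counit_antipode (k := k) (Sbar x)
  rw [hS2] at h
  exact h.symm

lemma sum_mul_sbar (Sbar : H →ₗ[k] H)
    (hS1 : ∀ h : H, Sbar (antipode (R := k) h) = h)
    (hS2 : ∀ h : H, antipode (R := k) (Sbar h) = h)
    {x : H} {ι : Type*} {s : Finset ι} {L R : ι → H}
    (he : Coalgebra.comul (R := k) x = ∑ i ∈ s, L i ⊗ₜ[k] R i) :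
    ∑ i ∈ s, R i * Sbar (L i) = Coalgebra.counit (R := k) x • 1 := by
  have h0 := comul_sbar_of Sbar hS1 hS2 he
  have h := mul_antipode_rTensor_comul_apply (R := k) (a := Sbar x)
  rw [h0] at h
  simp only [map_sum, rTensor_tmul, mul'_apply, hS2] at h
  rw [h, counit_sbar Sbar hS2, Algebra.algebraMap_eq_smul_one]

lemma lemK (Sbar : H →ₗ[k] H)
    (hS1 : ∀ h : H, Sbar (antipode (R := k) h) = h)
    (hS2 : ∀ h : H, antipode (R := k) (Sbar h) = h)
    {x : H} {ι : Type*} (rx : Coalgebra.Repr k x ι) :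
    ∑ i ∈ rx.index, theta Sbar
        (Coalgebra.comul (R := k) (rx.left i) ⊗ₜ[k] Coalgebra.comul (R := k) (rx.right i))
      = ∑ i ∈ rx.index, (1 : H) ⊗ₜ[k] (rx.right i ⊗ₜ[k] Sbar (rx.left i)) := by
  set QK : H ⊗[k] (H ⊗[k] H) →ₗ[k] H ⊗[k] (H ⊗[k] H) :=
    theta Sbar ∘ₗ (TensorProduct.assoc k H H (H ⊗[k] H)).symm.toLinearMap
      ∘ₗ LinearMap.lTensor H (LinearMap.lTensor H (Coalgebra.comul (R := k))) with hQK
  have QK_apply : ∀ (α β y : H), QK (α ⊗ₜ[k] (β ⊗ₜ[k] y))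
      = ∑ j ∈ (ℛ k y).index,
          ((ℛ k y).left j * Sbar β) ⊗ₜ[k] ((ℛ k y).right j ⊗ₜ[k] Sbar α) := by
    intro α β y
    rw [hQK]
    simp only [LinearMap.comp_apply, lTensor_tmul, LinearEquiv.coe_coe]
    rw [← (ℛ k y).eq]
    simp only [tmul_sum, map_sum, assoc_symm_tmul, theta_tmul]
  have expand : ∀ i ∈ rx.index,
      theta Sbar (Coalgebra.comul (R := k) (rx.left i) ⊗ₜ[k] Coalgebra.comul (R := k) (rx.right i))
        = ∑ m ∈ (ℛ k (rx.left i)).index,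
            QK ((ℛ k (rx.left i)).left m ⊗ₜ[k] ((ℛ k (rx.left i)).right m ⊗ₜ[k] rx.right i)) := by
    intro i _
    rw [← (ℛ k (rx.left i)).eq, sum_tmul, map_sum]
    refine Finset.sum_congr rfl fun m _ => ?_
    rw [hQK]
    simp only [comp_apply, lTensor_tmul, LinearEquiv.coe_coe, assoc_symm_tmul]
  rw [Finset.sum_congr rfl expand]
  have key := Coalgebra.sum_tmul_tmul_eq (R := k) rx
      (fun i => ℛ k (rx.left i)) (fun i => ℛ k (rx.right i))
  have keyQ := congrArg (fun z => QK z) key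
  simp only [map_sum] at keyQ
  rw [keyQ]
  refine Finset.sum_congr rfl fun i _ => ?_
  -- per i collapse
  set rr := ℛ k (rx.right i) with hrr
  have lhs_eq : ∑ j ∈ rr.index, QK (rx.left i ⊗ₜ[k] (rr.left j ⊗ₜ[k] rr.right j))
      = ∑ j ∈ rr.index, ∑ m ∈ (ℛ k (rr.right j)).index,
          ((ℛ k (rr.right j)).left m * Sbar (rr.left j)) ⊗ₜ[k]
            ((ℛ k (rr.right j)).right m ⊗ₜ[k] Sbar (rx.left i)) := by
    refine Finset.sum_congr rfl fun j _ => ?_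
    rw [QK_apply]
  have keyi := Coalgebra.sum_tmul_tmul_eq (R := k) rr
      (fun j => ℛ k (rr.left j)) (fun j => ℛ k (rr.right j))
  have keyiZ := congrArg (fun z => zetaMap Sbar (rx.left i) z) keyi
  simp only [map_sum, zetaMap_tmul] at keyiZ
  rw [lhs_eq, ← keyiZ]
  calc ∑ j ∈ rr.index, ∑ m ∈ (ℛ k (rr.left j)).index,
        ((ℛ k (rr.left j)).right m * Sbar ((ℛ k (rr.left j)).left m)) ⊗ₜ[k]
          (rr.right j ⊗ₜ[k] Sbar (rx.left i))
      = ∑ j ∈ rr.index, (Coalgebra.counit (R := k) (rr.left j) • (1 : H)) ⊗ₜ[k]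
          (rr.right j ⊗ₜ[k] Sbar (rx.left i)) := by
        refine Finset.sum_congr rfl fun j _ => ?_
        rw [← sum_tmul, sum_mul_sbar Sbar hS1 hS2 (ℛ k (rr.left j)).eq.symm]
    _ = (1 : H) ⊗ₜ[k] ((∑ j ∈ rr.index,
          Coalgebra.counit (R := k) (rr.left j) • rr.right j) ⊗ₜ[k] Sbar (rx.left i)) := by
        rw [sum_tmul, tmul_sum]
        refine Finset.sum_congr rfl fun j _ => ?_
        simp only [tmul_smul, ← smul_tmul']
    _ = (1 : H) ⊗ₜ[k] (rx.right i ⊗ₜ[k] Sbar (rx.left i)) := by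
        rw [sum_counit_smul_left rr.eq.symm]

end SmashAux

open Coalgebra LinearMap in
lemma smashRH_of (act : H →ₗ[k] A →ₗ[k] A) {h : H} {ι : Type*} {s : Finset ι} {L R : ι → H}
    (he : Coalgebra.comul (R := k) h = ∑ i ∈ s, L i ⊗ₜ[k] R i) (a : A) :
    smashRH act (h ⊗ₜ[k] a) = ∑ i ∈ s, act (L i) a ⊗ₜ[k] R i := by
  simp only [smashRH, LinearMap.comp_apply, LinearMap.rTensor_tmul, LinearEquiv.coe_coe]
  rw [he]
  simp only [sum_tmul, map_sum, LinearMap.rTensor_tmul, LinearEquiv.coe_coe, comm_tmul,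
    assoc_tmul, LinearMap.lTensor_tmul, lift.tmul]

open Coalgebra LinearMap in
lemma hInner_of (act : H →ₗ[k] A →ₗ[k] A) {h : H} {ι : Type*} {s : Finset ι} {L R : ι → H}
    (he : Coalgebra.comul (R := k) h = ∑ i ∈ s, L i ⊗ₜ[k] R i) (b : A) (g : H) :
    hInner act (h ⊗ₜ[k] (b ⊗ₜ[k] g)) = ∑ i ∈ s, act (L i) b ⊗ₜ[k] (R i * g) := by
  simp only [hInner, LinearMap.comp_apply, LinearEquiv.coe_coe, assoc_symm_tmul,
    LinearMap.rTensor_tmul]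
  rw [smashRH_of act he]
  simp only [sum_tmul, map_sum, assoc_tmul, LinearMap.lTensor_tmul, LinearMap.mul'_apply]

open Coalgebra LinearMap in
lemma hMul_of (act : H →ₗ[k] A →ₗ[k] A) {h : H} {ι : Type*} {s : Finset ι} {L R : ι → H}
    (he : Coalgebra.comul (R := k) h = ∑ i ∈ s, L i ⊗ₜ[k] R i) (a b : A) (g : H) :
    hMul act (a ⊗ₜ[k] h) (b ⊗ₜ[k] g) = ∑ i ∈ s, (a * act (L i) b) ⊗ₜ[k] (R i * g) := by
  simp only [hMul, hMulL, LinearMap.comp_apply, LinearEquiv.coe_coe, assoc_tmul,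
    LinearMap.lTensor_tmul]
  rw [hInner_of act he]
  simp only [tmul_sum, map_sum, assoc_symm_tmul, LinearMap.rTensor_tmul, LinearMap.mul'_apply]

open Coalgebra LinearMap in
lemma hNu_tmul (φ : H →ₗ[k] k) (a : A) (h : H) :
    hNu φ (a ⊗ₜ[k] h) = φ h • a := by
  simp [hNu]

open Coalgebra LinearMap in
lemma hE_of (Sbar : H →ₗ[k] H) {t : H} {ι : Type*} {s : Finset ι} {L R : ι → H}
    (he : Coalgebra.comul (R := k) t = ∑ i ∈ s, L i ⊗ₜ[k] R i) :
    hE Sbar t = ∑ i ∈ s, R i ⊗ₜ[k] Sbar (L i) := by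
  simp only [hE, he, map_sum, comm_tmul, TensorProduct.map_tmul, LinearMap.id_coe, id_eq]

open Coalgebra LinearMap in
lemma comul_one_of : Coalgebra.comul (R := k) (1 : H)
    = ∑ _i ∈ ({0} : Finset ℕ), (1 : H) ⊗ₜ[k] (1 : H) := by
  simp [Bialgebra.comul_one, Algebra.TensorProduct.one_def]

open Coalgebra LinearMap in
lemma hMul_one_left (act : H →ₗ[k] A →ₗ[k] A) (hact1 : ∀ b : A, act 1 b = b)
    (a b : A) (g : H) :
    hMul act (a ⊗ₜ[k] (1 : H)) (b ⊗ₜ[k] g) = (a * b) ⊗ₜ[k] g := by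
  rw [hMul_of act comul_one_of]
  simp [hact1]


open SmashAux LinearMap Coalgebra HopfAlgebra in
/-- `A # H` is a Frobenius extension of `A`, with Frobenius system
`(e = (1 # t₂) ⊗_A (1 # S̄(t₁)), ν̄ = id_A # φ)`. -/
theorem smash_frobenius_extension
    (Sbar : H →ₗ[k] H)
    (hS1 : ∀ h : H, Sbar (HopfAlgebra.antipode (R := k) h) = h)
    (hS2 : ∀ h : H, HopfAlgebra.antipode (R := k) (Sbar h) = h)
    (t : H) (ht : ∀ h : H, h * t = (Coalgebra.counit (R := k) h) • t)
    (φ : H →ₗ[k] k)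
    (hφ : ∀ h : H, TensorProduct.rid k H
      (LinearMap.lTensor H φ (Coalgebra.comul h)) = φ h • (1 : H))
    (hφt : φ t = 1)
    -- (t₂ ⊗ S̄(t₁), φ) is a Frobenius system for H over k
    (hfr1 : ∀ h : H, LinearMap.rTensor H (LinearMap.mulLeft k h) (hE Sbar t) =
      LinearMap.lTensor H (LinearMap.mulRight k h) (hE Sbar t))
    (hfr2 : TensorProduct.lid k H (LinearMap.rTensor H φ (hE Sbar t)) = 1)
    (hfr3 : TensorProduct.rid k H (LinearMap.lTensor H φ (hE Sbar t)) = 1)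
    -- A is a left H-module algebra
    (act : H →ₗ[k] A →ₗ[k] A)
    (hact1 : ∀ a : A, act 1 a = a)
    (hact2 : ∀ (g h : H) (a : A), act (g * h) a = act g (act h a))
    (hactmul : ∀ (h : H) (a b : A), act h (a * b) =
      LinearMap.mul' k A (TensorProduct.map (act.flip a) (act.flip b) (Coalgebra.comul h)))
    (hactone : ∀ h : H, act h (1 : A) = (Coalgebra.counit (R := k) h) • (1 : A)) :
    -- ν̄ is an A-bimodule map
    (∀ (a a' : A) (r : A ⊗[k] H),
      hNu φ (hMul act (hMul act (a ⊗ₜ[k] (1 : H)) r) (a' ⊗ₜ[k] (1 : H))) =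
        a * hNu φ r * a') ∧
    -- first dual-basis identity : Σ ν̄(r · (1 # t₂)) # S̄(t₁) = r
    (∀ r : A ⊗[k] H,
      TensorProduct.map
        (hNu φ ∘ₗ hMulL act ∘ₗ TensorProduct.mk k (A ⊗[k] H) (A ⊗[k] H) r ∘ₗ
          TensorProduct.mk k A H 1)
        LinearMap.id (hE Sbar t) = r) ∧
    -- second dual-basis identity : Σ (1 # t₂) · (ν̄((1 # S̄(t₁)) · r) # 1) = r
    (∀ r : A ⊗[k] H,
      (hMulL act ∘ₗ
        TensorProduct.map (TensorProduct.mk k A H 1) ((TensorProduct.mk k A H).flip 1) ∘ₗ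
        LinearMap.lTensor H
          (hNu φ ∘ₗ hMulL act ∘ₗ (TensorProduct.mk k (A ⊗[k] H) (A ⊗[k] H)).flip r ∘ₗ
            TensorProduct.mk k A H 1))
        (hE Sbar t) = r) := by
  classical
  have hE1 : hE Sbar t = ∑ i ∈ (ℛ k t).index, (ℛ k t).right i ⊗ₜ[k] Sbar ((ℛ k t).left i) :=
    hE_of Sbar (ℛ k t).eq.symm
  have e2 : ∑ i ∈ (ℛ k t).index, φ ((ℛ k t).right i) • Sbar ((ℛ k t).left i) = 1 := by
    have h0 := hfr2; rw [hE1] at h0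
    simpa only [map_sum, LinearMap.rTensor_tmul, lid_tmul] using h0
  have e3 : ∑ i ∈ (ℛ k t).index, φ (Sbar ((ℛ k t).left i)) • (ℛ k t).right i = 1 := by
    have h0 := hfr3; rw [hE1] at h0
    simpa only [map_sum, LinearMap.lTensor_tmul, rid_tmul] using h0
  have e1 : ∀ h : H, ∑ i ∈ (ℛ k t).index, (h * (ℛ k t).right i) ⊗ₜ[k] Sbar ((ℛ k t).left i)
      = ∑ i ∈ (ℛ k t).index, (ℛ k t).right i ⊗ₜ[k] (Sbar ((ℛ k t).left i) * h) := by
    intro h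
    have h0 := hfr1 h; rw [hE1] at h0
    simpa only [map_sum, LinearMap.rTensor_tmul, LinearMap.lTensor_tmul,
      LinearMap.mulLeft_apply, LinearMap.mulRight_apply] using h0
  have L2a : ∀ h : H, ∑ i ∈ (ℛ k t).index,
      φ (h * (ℛ k t).right i) • Sbar ((ℛ k t).left i) = h := by
    intro h
    have h4 := congrArg (fun z => TensorProduct.lid k H (LinearMap.rTensor H φ z)) (e1 h)
    simp only [map_sum, LinearMap.rTensor_tmul, lid_tmul] at h4
    rw [h4]
    calc ∑ i ∈ (ℛ k t).index, φ ((ℛ k t).right i) • (Sbar ((ℛ k t).left i) * h)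
        = (∑ i ∈ (ℛ k t).index, φ ((ℛ k t).right i) • Sbar ((ℛ k t).left i)) * h := by
          rw [Finset.sum_mul]
          exact Finset.sum_congr rfl fun i _ => (smul_mul_assoc _ _ _).symm
      _ = h := by rw [e2, one_mul]
  have L2b : ∀ h : H, ∑ i ∈ (ℛ k t).index,
      φ (Sbar ((ℛ k t).left i) * h) • (ℛ k t).right i = h := by
    intro h
    have h4 := congrArg (fun z => TensorProduct.rid k H (LinearMap.lTensor H φ z)) (e1 h)
    simp only [map_sum, LinearMap.lTensor_tmul, rid_tmul] at h4
    rw [← h4]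
    calc ∑ i ∈ (ℛ k t).index, φ (Sbar ((ℛ k t).left i)) • (h * (ℛ k t).right i)
        = h * ∑ i ∈ (ℛ k t).index, φ (Sbar ((ℛ k t).left i)) • (ℛ k t).right i := by
          rw [Finset.mul_sum]
          exact Finset.sum_congr rfl fun i _ => (mul_smul_comm _ _ _).symm
      _ = h := by rw [e3, mul_one]
  refine ⟨?_, ?_, ?_⟩
  · -- part 1 : bimodule map
    intro a a' r
    induction r using TensorProduct.induction_on with
    | zero =>
        simp only [hMul, tmul_zero, zero_tmul, map_zero, mul_zero, zero_mul]
    | add y z hy hz =>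
        have expand : hMul act (hMul act (a ⊗ₜ[k] (1 : H)) (y + z)) (a' ⊗ₜ[k] (1 : H))
            = hMul act (hMul act (a ⊗ₜ[k] (1 : H)) y) (a' ⊗ₜ[k] (1 : H))
              + hMul act (hMul act (a ⊗ₜ[k] (1 : H)) z) (a' ⊗ₜ[k] (1 : H)) := by
          simp only [hMul, tmul_add, map_add, add_tmul]
        rw [expand, map_add, hy, hz, map_add, mul_add, add_mul]
    | tmul b g =>
        rw [hMul_one_left act hact1, hMul_of act (ℛ k g).eq.symm, map_sum, hNu_tmul]
        simp only [hNu_tmul, mul_one]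
        have hsum : ∑ i ∈ (ℛ k g).index, φ ((ℛ k g).right i) • (ℛ k g).left i
            = φ g • (1 : H) := by
          have h0 := hφ g
          rw [← (ℛ k g).eq] at h0
          simpa only [map_sum, LinearMap.lTensor_tmul, rid_tmul] using h0
        calc ∑ i ∈ (ℛ k g).index, φ ((ℛ k g).right i) • (a * b * act ((ℛ k g).left i) a')
            = a * b * act (∑ i ∈ (ℛ k g).index,
                φ ((ℛ k g).right i) • (ℛ k g).left i) a' := by
              rw [map_sum, LinearMap.sum_apply, Finset.mul_sum]
              exact Finset.sum_congr rfl fun i _ => by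
                rw [map_smul, LinearMap.smul_apply, mul_smul_comm]
          _ = a * b * act ((φ g) • (1 : H)) a' := by rw [hsum]
          _ = a * (φ g • b) * a' := by
              rw [map_smul, LinearMap.smul_apply, hact1]
              simp only [mul_smul_comm, smul_mul_assoc, mul_assoc]
  · -- part 2 : first dual basis identity
    intro r
    induction r using TensorProduct.induction_on with
    | zero =>
        rw [show (TensorProduct.mk k (A ⊗[k] H) (A ⊗[k] H)) 0 = 0 from map_zero _]
        simp only [LinearMap.comp_zero, LinearMap.zero_comp, TensorProduct.map_zero_left,
          LinearMap.zero_apply]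
    | add y z hy hz =>
        rw [show (TensorProduct.mk k (A ⊗[k] H) (A ⊗[k] H)) (y + z)
            = TensorProduct.mk k (A ⊗[k] H) (A ⊗[k] H) y
              + TensorProduct.mk k (A ⊗[k] H) (A ⊗[k] H) z from map_add _ _ _]
        simp only [LinearMap.comp_add, LinearMap.add_comp, TensorProduct.map_add_left,
          LinearMap.add_apply]
        rw [hy, hz]
    | tmul a h =>
        have hf : ∀ x : H, (hNu φ ∘ₗ hMulL act
            ∘ₗ TensorProduct.mk k (A ⊗[k] H) (A ⊗[k] H) (a ⊗ₜ[k] h)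
            ∘ₗ TensorProduct.mk k A H 1) x = φ (h * x) • a := by
          intro x
          simp only [LinearMap.comp_apply, TensorProduct.mk_apply]
          rw [show hMulL act ((a ⊗ₜ[k] h) ⊗ₜ[k] ((1 : A) ⊗ₜ[k] x))
              = hMul act (a ⊗ₜ[k] h) ((1 : A) ⊗ₜ[k] x) from rfl]
          rw [hMul_of act (ℛ k h).eq.symm, map_sum]
          simp only [hNu_tmul, hactone]
          have hh : ∑ i ∈ (ℛ k h).index,
              Coalgebra.counit (R := k) ((ℛ k h).left i) • (ℛ k h).right i = h :=
            sum_counit_smul_left (ℛ k h).eq.symm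
          conv_rhs => rw [← hh]
          rw [Finset.sum_mul, map_sum, Finset.sum_smul]
          refine Finset.sum_congr rfl fun i _ => ?_
          rw [mul_smul_comm, mul_one, smul_smul, smul_mul_assoc, map_smul, smul_eq_mul,
            mul_comm]
        rw [hE1, map_sum]
        simp only [TensorProduct.map_tmul, LinearMap.id_coe, id_eq, hf]
        calc ∑ i ∈ (ℛ k t).index, (φ (h * (ℛ k t).right i) • a) ⊗ₜ[k] Sbar ((ℛ k t).left i)
            = a ⊗ₜ[k] (∑ i ∈ (ℛ k t).index,
                φ (h * (ℛ k t).right i) • Sbar ((ℛ k t).left i)) := by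
              rw [tmul_sum]
              exact Finset.sum_congr rfl fun i _ => smul_tmul _ _ _
          _ = a ⊗ₜ[k] h := by rw [L2a h]
  · -- part 3 : second dual basis identity
    intro r
    induction r using TensorProduct.induction_on with
    | zero =>
        rw [show ((TensorProduct.mk k (A ⊗[k] H) (A ⊗[k] H)).flip) (0 : A ⊗[k] H) = 0 from
          map_zero _]
        simp only [LinearMap.comp_zero, LinearMap.zero_comp, LinearMap.lTensor_zero,
          TensorProduct.map_zero_left, LinearMap.zero_apply, map_zero]
    | add y z hy hz =>
        rw [show ((TensorProduct.mk k (A ⊗[k] H) (A ⊗[k] H)).flip) (y + z)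
            = (TensorProduct.mk k (A ⊗[k] H) (A ⊗[k] H)).flip y
              + (TensorProduct.mk k (A ⊗[k] H) (A ⊗[k] H)).flip z from map_add _ _ _]
        simp only [LinearMap.comp_add, LinearMap.add_comp, LinearMap.lTensor_add,
          LinearMap.comp_add, LinearMap.add_apply, map_add]
        rw [hy, hz]
    | tmul a h =>
        set Xi : H ⊗[k] (H ⊗[k] H) →ₗ[k] A ⊗[k] H :=
          TensorProduct.map (act.flip a)
            ((TensorProduct.rid k H).toLinearMap
              ∘ₗ LinearMap.lTensor H (φ ∘ₗ LinearMap.mulRight k h)) with hXi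
        have Xi_tmul : ∀ w n z : H, Xi (w ⊗ₜ[k] (n ⊗ₜ[k] z))
            = φ (z * h) • (act w a ⊗ₜ[k] n) := by
          intro w n z
          rw [hXi]
          simp only [TensorProduct.map_tmul, LinearMap.comp_apply, LinearMap.lTensor_tmul,
            LinearEquiv.coe_coe, rid_tmul, LinearMap.mulRight_apply, LinearMap.flip_apply,
            tmul_smul]
        have hG : ∀ i, (hNu φ ∘ₗ hMulL act
            ∘ₗ (TensorProduct.mk k (A ⊗[k] H) (A ⊗[k] H)).flip (a ⊗ₜ[k] h)
            ∘ₗ TensorProduct.mk k A H 1) (Sbar ((ℛ k t).left i))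
            = ∑ m ∈ (ℛ k ((ℛ k t).left i)).index,
                φ (Sbar ((ℛ k ((ℛ k t).left i)).left m) * h)
                  • act (Sbar ((ℛ k ((ℛ k t).left i)).right m)) a := by
          intro i
          simp only [LinearMap.comp_apply, TensorProduct.mk_apply, LinearMap.flip_apply]
          rw [show hMulL act (((1 : A) ⊗ₜ[k] Sbar ((ℛ k t).left i)) ⊗ₜ[k] (a ⊗ₜ[k] h))
              = hMul act ((1 : A) ⊗ₜ[k] Sbar ((ℛ k t).left i)) (a ⊗ₜ[k] h) from rfl]
          rw [hMul_of act (comul_sbar_of Sbar hS1 hS2 (ℛ k ((ℛ k t).left i)).eq.symm),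
            map_sum]
          simp only [hNu_tmul, one_mul]
        have term_eq : ∀ i ∈ (ℛ k t).index,
            (hMulL act ∘ₗ
              TensorProduct.map (TensorProduct.mk k A H 1) ((TensorProduct.mk k A H).flip 1) ∘ₗ
              LinearMap.lTensor H
                (hNu φ ∘ₗ hMulL act
                  ∘ₗ (TensorProduct.mk k (A ⊗[k] H) (A ⊗[k] H)).flip (a ⊗ₜ[k] h)
                  ∘ₗ TensorProduct.mk k A H 1))
              ((ℛ k t).right i ⊗ₜ[k] Sbar ((ℛ k t).left i))
            = Xi (theta Sbar (Coalgebra.comul (R := k) ((ℛ k t).left i)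
                ⊗ₜ[k] Coalgebra.comul (R := k) ((ℛ k t).right i))) := by
          intro i _
          rw [LinearMap.comp_apply, LinearMap.comp_apply, LinearMap.lTensor_tmul, hG i]
          -- push the sum through
          rw [tmul_sum, map_sum, map_sum]
          have lhs2 : ∀ m, hMulL act
              (TensorProduct.map (TensorProduct.mk k A H 1) ((TensorProduct.mk k A H).flip 1)
                ((ℛ k t).right i ⊗ₜ[k]
                  (φ (Sbar ((ℛ k ((ℛ k t).left i)).left m) * h)
                    • act (Sbar ((ℛ k ((ℛ k t).left i)).right m)) a)))
              = ∑ j ∈ (ℛ k ((ℛ k t).right i)).index,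
                  φ (Sbar ((ℛ k ((ℛ k t).left i)).left m) * h) •
                    (act ((ℛ k ((ℛ k t).right i)).left j
                        * Sbar ((ℛ k ((ℛ k t).left i)).right m)) a
                      ⊗ₜ[k] (ℛ k ((ℛ k t).right i)).right j) := by
            intro m
            rw [TensorProduct.map_tmul, TensorProduct.mk_apply, LinearMap.flip_apply,
              TensorProduct.mk_apply, ← smul_tmul', tmul_smul, LinearMap.map_smul]
            rw [show hMulL act (((1 : A) ⊗ₜ[k] (ℛ k t).right i) ⊗ₜ[k]
                ((act (Sbar ((ℛ k ((ℛ k t).left i)).right m)) a) ⊗ₜ[k] (1 : H)))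
                = hMul act ((1 : A) ⊗ₜ[k] (ℛ k t).right i)
                  ((act (Sbar ((ℛ k ((ℛ k t).left i)).right m)) a) ⊗ₜ[k] (1 : H)) from rfl]
            rw [hMul_of act (ℛ k ((ℛ k t).right i)).eq.symm, Finset.smul_sum]
            refine Finset.sum_congr rfl fun j _ => ?_
            rw [one_mul, mul_one, ← hact2]
          rw [Finset.sum_congr rfl fun m _ => lhs2 m]
          -- now the right side
          rw [← (ℛ k ((ℛ k t).left i)).eq, ← (ℛ k ((ℛ k t).right i)).eq]
          rw [sum_tmul, map_sum, map_sum]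
          refine Finset.sum_congr rfl fun m _ => ?_
          rw [tmul_sum, map_sum, map_sum]
          refine Finset.sum_congr rfl fun j _ => ?_
          rw [theta_tmul, Xi_tmul]
        rw [hE1, map_sum, Finset.sum_congr rfl term_eq, ← map_sum, lemK Sbar hS1 hS2 (ℛ k t),
          map_sum]
        have fin : ∀ i, Xi ((1 : H) ⊗ₜ[k] ((ℛ k t).right i ⊗ₜ[k] Sbar ((ℛ k t).left i)))
            = a ⊗ₜ[k] (φ (Sbar ((ℛ k t).left i) * h) • (ℛ k t).right i) := by
          intro i
          rw [Xi_tmul, show act (1 : H) a = a from hact1 a, ← tmul_smul]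
        rw [Finset.sum_congr rfl fun i _ => fin i, ← tmul_sum, L2b h]
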